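/- Let β > 0 and X ∈ ℝ^{n×p} of full column rank. Define g^β(ξ,ζ) := ⟨(I_n − (1−β)X(XᵀX)⁻¹Xᵀ) ζ (XᵀX)⁻¹, ξ⟩ with the Frobenius inner product. Then g^β is a symmetric positive definite inner product on ℝ^{n×p}, and the tangent space T = {ξ : Xᵀξ + ξᵀX = 0} and the normal space N_X = {X(XᵀX)⁻¹S : S ∈ Sym(p)} are g^β-orthogonal. -/

import Mathlib

open Matrix

/-- The `β`-metric `g^β(ξ,ζ) = ⟨(I_n − (1−β)X(XᵀX)⁻¹Xᵀ) ζ (XᵀX)⁻¹, ξ⟩` (Frobenius). -/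
noncomputable def gbeta {n p : ℕ} (β : ℝ) (X ξ ζ : Matrix (Fin n) (Fin p) ℝ) : ℝ :=
  ((((1 - (1 - β) • (X * (Xᵀ * X)⁻¹ * Xᵀ)) * ζ * (Xᵀ * X)⁻¹)ᵀ) * ξ).trace

private lemma aux_trace_tmul_comm {a b : ℕ} (C D : Matrix (Fin a) (Fin b) ℝ) :
    (Cᵀ * D).trace = (Dᵀ * C).trace := by
  rw [← trace_transpose (Cᵀ * D), transpose_mul, transpose_transpose]

private lemma aux_trace_pos {n p : ℕ} {A : Matrix (Fin p) (Fin p) ℝ} (hA : A.PosDef)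
    (N : Matrix (Fin n) (Fin p) ℝ) (hN : N ≠ 0) : 0 < (N * A * Nᵀ).trace := by
  have h1 : ∀ i, (N * A * Nᵀ) i i = dotProduct (N i) (A *ᵥ (N i)) := by
    intro i
    simp only [mul_apply, transpose_apply, dotProduct, mulVec, Finset.sum_mul, Finset.mul_sum]
    rw [Finset.sum_comm]
    refine Finset.sum_congr rfl fun j _ => Finset.sum_congr rfl fun k _ => by ring
  rw [trace]
  have hex : ∃ i, N i ≠ 0 := by
    by_contra h
    push_neg at h
    exact hN (by ext i j; simpa using congrFun (h i) j)
  obtain ⟨i, hi⟩ := hex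
  refine Finset.sum_pos' (fun j _ => ?_) ⟨i, Finset.mem_univ i, ?_⟩
  · rw [diag, h1]
    simpa using hA.posSemidef.dotProduct_mulVec_nonneg (N j)
  · rw [diag, h1]
    simpa using hA.dotProduct_mulVec_pos hi

private lemma aux_posdef_proj {n : ℕ} {β : ℝ} (hβ : 0 < β) {P : Matrix (Fin n) (Fin n) ℝ}
    (hPt : Pᵀ = P) (hPP : P * P = P) :
    (1 - (1 - β) • P).PosDef := by
  refine PosDef.of_dotProduct_mulVec_pos ?_ ?_
  · show (1 - (1 - β) • P)ᴴ = _
    have h : Pᴴ = P := by rw [conjTranspose_eq_transpose_of_trivial, hPt]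
    simp [conjTranspose_sub, conjTranspose_smul, h, hPt]
  · intro x hx
    set y := P *ᵥ x with hy
    have key : dotProduct x y = dotProduct y y := by
      have h1 : dotProduct y y = dotProduct (y ᵥ* P) x := by
        rw [dotProduct_mulVec]
      have h2 : y ᵥ* P = y := by
        rw [show y ᵥ* P = Pᵀ *ᵥ y from (mulVec_transpose P y).symm, hPt, hy,
          mulVec_mulVec, hPP]
      rw [dotProduct_comm x y, h1, h2]
    have expand : dotProduct (star x) ((1 - (1 - β) • P) *ᵥ x)
        = dotProduct (x - y) (x - y) + β * dotProduct y y := by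
      rw [star_trivial, sub_mulVec, smul_mulVec, one_mulVec]
      simp only [dotProduct_sub, sub_dotProduct, dotProduct_smul, smul_eq_mul]
      have hxy : dotProduct y x = dotProduct x y := dotProduct_comm y x
      rw [hxy]
      nlinarith [key]
    rw [expand]
    rcases eq_or_ne y 0 with h0 | h0
    · rw [h0, sub_zero, zero_dotProduct, mul_zero, add_zero]
      have hnn : 0 ≤ dotProduct x x := by simpa using dotProduct_star_self_nonneg x
      exact lt_of_le_of_ne hnn (fun h => hx (dotProduct_self_eq_zero.mp h.symm))
    · have hnn : 0 ≤ dotProduct (x - y) (x - y) := by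
        simpa using dotProduct_star_self_nonneg (x - y)
      have hnn2 : 0 ≤ dotProduct y y := by
        simpa using dotProduct_star_self_nonneg y
      have hpos : 0 < dotProduct y y :=
        lt_of_le_of_ne hnn2 (fun h => h0 (dotProduct_self_eq_zero.mp h.symm))
      nlinarith

/-- For `β > 0`, `g^β` is a symmetric positive definite inner product on `ℝ^{n×p}`,
and the tangent space `T = {ξ : Xᵀξ + ξᵀX = 0}` and normal space
`N_X = {X(XᵀX)⁻¹S : S ∈ Sym(p)}` are `g^β`-orthogonal. -/
theorem gbeta_inner_product_and_orthogonality {n p : ℕ} (β : ℝ) (hβ : 0 < β)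
    (X : Matrix (Fin n) (Fin p) ℝ) (hX : X.rank = p) :
    (∀ ξ ζ : Matrix (Fin n) (Fin p) ℝ, gbeta β X ξ ζ = gbeta β X ζ ξ) ∧
    (∀ ξ : Matrix (Fin n) (Fin p) ℝ, ξ ≠ 0 → 0 < gbeta β X ξ ξ) ∧
    (∀ ξ : Matrix (Fin n) (Fin p) ℝ, Xᵀ * ξ + ξᵀ * X = 0 →
      ∀ S : Matrix (Fin p) (Fin p) ℝ, S.IsSymm →
        gbeta β X ξ (X * (Xᵀ * X)⁻¹ * S) = 0) := by
  set K : Matrix (Fin p) (Fin p) ℝ := Xᵀ * X with hKdef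
  set A : Matrix (Fin p) (Fin p) ℝ := K⁻¹ with hAdef
  set P : Matrix (Fin n) (Fin n) ℝ := X * A * Xᵀ with hPdef
  set M : Matrix (Fin n) (Fin n) ℝ := 1 - (1 - β) • P with hMdef
  -- injectivity of mulVec
  have hinj : Function.Injective X.mulVec := by
    have h := X.mulVecLin.finrank_range_add_finrank_ker
    rw [show (Module.finrank ℝ (LinearMap.range X.mulVecLin)) = p from hX,
      Module.finrank_pi, Fintype.card_fin] at h
    have hker : LinearMap.ker X.mulVecLin = ⊥ := by
      rw [← Submodule.finrank_eq_zero (R := ℝ)]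
      omega
    exact LinearMap.ker_eq_bot.mp hker
  -- K is positive definite, hence invertible
  have hK : K.PosDef := by
    refine PosDef.of_dotProduct_mulVec_pos
      (by simpa [hKdef] using isHermitian_conjTranspose_mul_self X) fun x hx => ?_
    have hx' : X.mulVec x ≠ 0 := fun h => hx (hinj (by simpa using h))
    have heq : dotProduct (star x) (K *ᵥ x) = dotProduct (X *ᵥ x) (X *ᵥ x) := by
      rw [star_trivial, hKdef, ← mulVec_mulVec, dotProduct_mulVec, vecMul_transpose]
    rw [heq]
    have h0 : dotProduct (X *ᵥ x) (X *ᵥ x) ≠ 0 := fun h => hx' (dotProduct_self_eq_zero.mp h)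
    have h1 : 0 ≤ dotProduct (X *ᵥ x) (X *ᵥ x) := by
      simpa using dotProduct_star_self_nonneg (X *ᵥ x)
    exact lt_of_le_of_ne h1 (Ne.symm h0)
  have hKu : IsUnit K.det := (isUnit_iff_isUnit_det K).mp hK.isUnit
  have hAK : A * K = 1 := nonsing_inv_mul K hKu
  have hA : A.PosDef := hK.inv
  have hKt : Kᵀ = K := by rw [hKdef, transpose_mul, transpose_transpose]
  have hAt : Aᵀ = A := by rw [hAdef, transpose_nonsing_inv, hKt]
  have hPt : Pᵀ = P := by
    rw [hPdef]
    simp [transpose_mul, transpose_transpose, hAt, Matrix.mul_assoc]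
  have hPP : P * P = P := by
    rw [hPdef]
    calc X * A * Xᵀ * (X * A * Xᵀ) = X * ((A * (Xᵀ * X)) * (A * Xᵀ)) := by
          simp only [Matrix.mul_assoc]
      _ = X * A * Xᵀ := by rw [← hKdef, hAK, Matrix.one_mul, Matrix.mul_assoc]
  have hM : M.PosDef := aux_posdef_proj hβ hPt hPP
  have hMt : Mᵀ = M := by
    rw [hMdef, transpose_sub, transpose_smul, transpose_one, hPt]
  -- reformulation of gbeta
  have hgb : ∀ ξ ζ : Matrix (Fin n) (Fin p) ℝ,
      gbeta β X ξ ζ = (ξᵀ * M * ζ * A).trace := by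
    intro ξ ζ
    have h0 : gbeta β X ξ ζ = ((M * ζ * A)ᵀ * ξ).trace := by
      rw [hMdef, hPdef, hAdef, hKdef]
      rfl
    rw [h0, aux_trace_tmul_comm]
    simp only [Matrix.mul_assoc]
  -- MX = β • X
  have hMX : M * X = β • X := by
    rw [hMdef, Matrix.sub_mul, Matrix.one_mul, Matrix.smul_mul, hPdef,
      Matrix.mul_assoc (X * A) Xᵀ X, ← hKdef, Matrix.mul_assoc X A K, hAK, Matrix.mul_one]
    ext i j
    simp [Matrix.sub_apply, Matrix.smul_apply, smul_eq_mul]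
    ring
  refine ⟨?_, ?_, ?_⟩
  · -- symmetry
    intro ξ ζ
    rw [hgb, hgb]
    calc (ξᵀ * M * ζ * A).trace = ((ξᵀ * M * ζ * A)ᵀ).trace := (trace_transpose _).symm
      _ = (Aᵀ * (ζᵀ * (Mᵀ * ξ))).trace := by
          simp only [transpose_mul, transpose_transpose, Matrix.mul_assoc]
      _ = (A * (ζᵀ * (M * ξ))).trace := by rw [hAt, hMt]
      _ = (ζᵀ * (M * ξ) * A).trace := trace_mul_comm _ _
      _ = (ζᵀ * M * ξ * A).trace := by simp only [Matrix.mul_assoc]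
  · -- positive definiteness
    intro ξ hξ
    rw [hgb]
    set B := (open scoped MatrixOrder in CFC.sqrt M) with hBdef
    have hBB : B * B = M := by
      open scoped MatrixOrder in exact CFC.sqrt_mul_sqrt_self M hM.posSemidef.nonneg
    have hBt : Bᵀ = B := by
      have h : B.IsHermitian := by
        open scoped MatrixOrder in exact (CFC.sqrt_nonneg M).posSemidef.isHermitian
      rwa [Matrix.IsHermitian, conjTranspose_eq_transpose_of_trivial] at h
    have hBu : IsUnit B.det := by
      have hMdet : B.det * B.det = M.det := by rw [← det_mul, hBB]
      have hne : M.det ≠ 0 := ne_of_gt hM.det_pos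
      rw [isUnit_iff_ne_zero]
      intro h
      rw [h, mul_zero] at hMdet
      exact hne hMdet.symm
    set N := B * ξ with hNdef
    have hN : N ≠ 0 := by
      intro h
      apply hξ
      have h2 : B⁻¹ * (B * ξ) = 0 := by rw [← hNdef, h, Matrix.mul_zero]
      rwa [← Matrix.mul_assoc, nonsing_inv_mul B hBu, Matrix.one_mul] at h2
    have key : (ξᵀ * M * ξ * A).trace = (N * A * Nᵀ).trace := by
      calc (ξᵀ * M * ξ * A).trace = ((ξᵀ * B) * (B * ξ * A)).trace := by
            rw [← hBB]; simp only [Matrix.mul_assoc]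
        _ = ((B * ξ * A) * (ξᵀ * B)).trace := trace_mul_comm _ _
        _ = (N * A * Nᵀ).trace := by
            simp only [hNdef, transpose_mul, hBt, Matrix.mul_assoc]
    rw [key]
    exact aux_trace_pos hA N hN
  · -- orthogonality
    intro ξ hξ S hS
    rw [hgb]
    have h1 : M * (X * A * S) = β • (X * A * S) := by
      calc M * (X * A * S) = (M * X) * (A * S) := by simp only [Matrix.mul_assoc]
        _ = (β • X) * (A * S) := by rw [hMX]
        _ = β • (X * A * S) := by rw [Matrix.smul_mul]; simp only [Matrix.mul_assoc]
    have h2 : ξᵀ * M * (X * A * S) * A = β • (ξᵀ * X * (A * S * A)) := by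
      rw [Matrix.mul_assoc ξᵀ M, h1, Matrix.mul_smul, Matrix.smul_mul]
      congr 1
      simp only [Matrix.mul_assoc]
    rw [h2, trace_smul, smul_eq_mul]
    have hξX : ξᵀ * X = -(Xᵀ * ξ) := eq_neg_of_add_eq_zero_right hξ
    set W := A * S * A with hWdef
    have hWt : Wᵀ = W := by
      rw [hWdef, transpose_mul, transpose_mul, hAt, hS.eq, Matrix.mul_assoc]
    have ht : (ξᵀ * X * W).trace = 0 := by
      have e1 : (ξᵀ * X * W).trace = -((Xᵀ * ξ) * W).trace := by
        rw [hξX, Matrix.neg_mul, trace_neg]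
      have e2 : ((Xᵀ * ξ) * W).trace = (ξᵀ * X * W).trace := by
        calc ((Xᵀ * ξ) * W).trace = (((Xᵀ * ξ) * W)ᵀ).trace := (trace_transpose _).symm
          _ = (Wᵀ * (ξᵀ * X)).trace := by
              simp only [transpose_mul, transpose_transpose, Matrix.mul_assoc]
          _ = (W * (ξᵀ * X)).trace := by rw [hWt]
          _ = ((ξᵀ * X) * W).trace := trace_mul_comm _ _
      rw [e2] at e1
      linarith
    rw [show ξᵀ * X * (A * S * A) = ξᵀ * X * W from rfl, ht, mul_zero]
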